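/- Let G be a square-decomposable connected graph. Then any two non-backtracking walks p, q on G with the same starting vertex and the same ending vertex satisfy p ∼_□ q. -/

import Mathlib

/-- An undirected graph (self-loops allowed) given by a symmetric adjacency relation. -/
structure GraphL (V : Type*) where
  Adj : V → V → Prop
  symm : ∀ {a b : V}, Adj a b → Adj b a

/-- A walk on `G`: a nonempty list of vertices with consecutive vertices adjacent.
Its length is the number of edges, i.e. `p.length - 1`. -/
def IsWalkL {V : Type*} (G : GraphL V) (p : List V) : Prop :=
  p ≠ [] ∧ p.Chain' G.Adj

/-- A cycle on `G`: a walk with equal endpoints. -/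
def IsCycleL {V : Type*} (G : GraphL V) (p : List V) : Prop :=
  IsWalkL G p ∧ p.head? = p.getLast?

/-- A simple cycle: repetitions occur only at the two endpoints. -/
def IsSimpleCycleL {V : Type*} (G : GraphL V) (p : List V) : Prop :=
  IsCycleL G p ∧
  ∀ i j : ℕ, i < j → j < p.length → p[i]? = p[j]? → i = 0 ∧ j = p.length - 1

/-- `G` is connected. -/
def GraphL.ConnectedL {V : Type*} (G : GraphL V) : Prop :=
  ∀ u v : V, ∃ p : List V, IsWalkL G p ∧ p.head? = some u ∧ p.getLast? = some v

/-- `G` is bipartite. -/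
def GraphL.Bipartite {V : Type*} (G : GraphL V) : Prop :=
  ∃ f : V → Bool, ∀ a b : V, G.Adj a b → f a ≠ f b

/-- A walk is non-backtracking when it contains no subword of the form `x y x`. -/
def NonBacktracking {V : Type*} (p : List V) : Prop :=
  ¬ ∃ (l r : List V) (a b : V), p = l ++ a :: b :: a :: r

/-- One spine removal: replace some subword `a b a` by `a`. -/
def SpineStep {V : Type*} (p q : List V) : Prop :=
  ∃ (l r : List V) (a b : V), p = l ++ a :: b :: a :: r ∧ q = l ++ a :: r

open Classical in
/-- Backtrack removal `φ`: a non-backtracking walk obtained from `p` by repeatedly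
removing spines (well defined since the normal form is unique). -/
noncomputable def phi {V : Type*} (p : List V) : List V :=
  if h : ∃ q : List V, Relation.ReflTransGen SpineStep p q ∧ NonBacktracking q
  then h.choose else p

/-- A square: a non-backtracking cycle of length four. -/
def IsSquareCycle {V : Type*} (G : GraphL V) (s : List V) : Prop :=
  IsWalkL G s ∧ NonBacktracking s ∧ s.length = 5 ∧ s.head? = s.getLast?

/-- `c ⊕_k s`: insert the cycle `s` into the walk `c` at position `k`
(requires `c_k = s_0` to be meaningful). -/
def oplus {V : Type*} (c : List V) (k : ℕ) (s : List V) : List V :=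
  c.take k ++ s ++ c.drop (k + 1)

/-- Two non-backtracking walks `p, q` differ by a square when
`q = φ(p ⊕_k s)` or `p = φ(q ⊕_k s)` for some index `k` and square `s`. -/
def DifferSq {V : Type*} (G : GraphL V) (p q : List V) : Prop :=
  (∃ (k : ℕ) (s : List V), IsSquareCycle G s ∧ p[k]? = s.head? ∧ q = phi (oplus p k s)) ∨
  (∃ (k : ℕ) (s : List V), IsSquareCycle G s ∧ q[k]? = s.head? ∧ p = phi (oplus q k s))

/-- `G` is square-decomposable: every simple cycle is equivalent, under the
reflexive-transitive closure of `DifferSq`, to a trivial cycle of length 0. -/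
def SquareDecomposable {V : Type*} (G : GraphL V) : Prop :=
  ∀ c : List V, IsSimpleCycleL G c →
    ∃ v : V, Relation.ReflTransGen (DifferSq G) c [v]

namespace SqAux
variable {V : Type*}

open Classical in
/-- one reduction head step -/
noncomputable def g (a : V) : List V → List V
  | c :: a' :: t => if a' = a then a :: t else a :: c :: a' :: t
  | w => a :: w

/-- full reduction to normal form -/
noncomputable def red : List V → List V
  | [] => []
  | a :: l => g a (red l)

@[simp] lemma g_nil (a : V) : g a ([] : List V) = [a] := rfl
@[simp] lemma g_single (a c : V) : g a [c] = [a, c] := rfl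
lemma g_cons_eq (a c : V) (t : List V) : g a (c :: a :: t) = a :: t := by
  simp [g]
lemma g_cons_ne (a c a' : V) (t : List V) (h : a' ≠ a) :
    g a (c :: a' :: t) = a :: c :: a' :: t := by
  simp [g, h]

@[simp] lemma red_nil : red ([] : List V) = [] := rfl
lemma red_cons (a : V) (l : List V) : red (a :: l) = g a (red l) := rfl

lemma g_eq_cons (a : V) (w : List V) : ∃ t, g a w = a :: t := by
  match w with
  | [] => exact ⟨[], rfl⟩
  | [c] => exact ⟨[c], rfl⟩
  | c :: a' :: t =>
    by_cases h : a' = a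
    · subst h; exact ⟨t, g_cons_eq _ c t⟩
    · exact ⟨c :: a' :: t, g_cons_ne a c a' t h⟩

lemma NB_iff_get {p : List V} :
    NonBacktracking p ↔ ∀ i (a : V), ¬ (p[i]? = some a ∧ p[i+2]? = some a) := by
  constructor
  · rintro h i a ⟨h1, h2⟩
    apply h
    have hi2 : i + 2 < p.length := List.getElem?_eq_some_iff.mp h2 |>.1
    have hi1 : i + 1 < p.length := by omega
    refine ⟨p.take i, p.drop (i+3), a, p.get ⟨i+1, hi1⟩, ?_⟩
    have e1 : p = p.take i ++ p.drop i := (List.take_append_drop i p).symm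
    have : p.drop i = a :: p.get ⟨i+1, hi1⟩ :: a :: p.drop (i+3) := by
      have d1 : p.drop i = p.get ⟨i, by omega⟩ :: p.drop (i+1) := List.drop_eq_getElem_cons (by omega)
      have d2 : p.drop (i+1) = p.get ⟨i+1, hi1⟩ :: p.drop (i+2) := List.drop_eq_getElem_cons hi1
      have d3 : p.drop (i+2) = p.get ⟨i+2, hi2⟩ :: p.drop (i+3) := List.drop_eq_getElem_cons hi2
      have ga : p.get ⟨i, by omega⟩ = a := by
        have := List.getElem?_eq_getElem (show i < p.length by omega)
        rw [this] at h1; exact Option.some_injective _ h1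
      have ga2 : p.get ⟨i+2, hi2⟩ = a := by
        have := List.getElem?_eq_getElem hi2
        rw [this] at h2; exact Option.some_injective _ h2
      rw [d1, d2, d3, ga, ga2]
    conv_lhs => rw [e1, this]
  · rintro h ⟨l, r, a, b, rfl⟩
    apply h l.length a
    constructor
    · rw [List.getElem?_append_right (le_refl _)]
      simp
    · rw [List.getElem?_append_right (by omega)]
      have : l.length + 2 - l.length = 2 := by omega
      rw [this]; rfl

lemma NB_cons {a : V} {w : List V} :
    NonBacktracking (a :: w) ↔ NonBacktracking w ∧ w[1]? ≠ some a := by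
  simp only [NB_iff_get]
  constructor
  · intro h
    refine ⟨fun i c hc => h (i+1) c (by simpa using hc), fun hw => h 0 a ⟨rfl, by simpa using hw⟩⟩
  · rintro ⟨h1, h2⟩ i c ⟨hc1, hc2⟩
    match i with
    | 0 =>
      simp at hc1; subst hc1
      exact h2 (by simpa using hc2)
    | Nat.succ j => exact h1 j c ⟨by simpa using hc1, by simpa using hc2⟩

@[simp] lemma NB_nil : NonBacktracking ([] : List V) := by
  rw [NB_iff_get]; rintro i a ⟨h, -⟩; simp at h

@[simp] lemma NB_single (a : V) : NonBacktracking [a] := by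
  rw [NB_cons]; simp

lemma NB_g {a : V} {w : List V} (hw : NonBacktracking w) : NonBacktracking (g a w) := by
  match w with
  | [] => simpa using NB_single a
  | [c] =>
    rw [g_single, NB_cons]
    refine ⟨NB_single c, by simp⟩
  | c :: a' :: t =>
    by_cases h : a' = a
    · subst h
      rw [g_cons_eq]
      exact (NB_cons.mp hw).1
    · rw [g_cons_ne a c a' t h, NB_cons]
      exact ⟨hw, by simp [h]⟩

lemma NB_red (x : List V) : NonBacktracking (red x) := by
  induction x with
  | nil => simp
  | cons a l ih => rw [red_cons]; exact NB_g ih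

open Relation

lemma red_eq_of_NB {x : List V} (h : NonBacktracking x) : red x = x := by
  induction x with
  | nil => simp
  | cons a l ih =>
    rw [red_cons, ih (NB_cons.mp h).1]
    match l with
    | [] => rfl
    | [c] => rfl
    | c :: a' :: t =>
      have : a' ≠ a := fun he => (NB_cons.mp h).2 (by simp [he])
      exact g_cons_ne a c a' t this

lemma spine_context {p q : List V} (L R : List V) (h : SpineStep p q) :
    SpineStep (L ++ p ++ R) (L ++ q ++ R) := by
  obtain ⟨l, r, a, b, rfl, rfl⟩ := h
  exact ⟨L ++ l, r ++ R, a, b, by simp, by simp⟩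

lemma RTG_context {p q : List V} (L R : List V)
    (h : ReflTransGen (SpineStep (V := V)) p q) :
    ReflTransGen (SpineStep (V := V)) (L ++ p ++ R) (L ++ q ++ R) := by
  induction h with
  | refl => exact ReflTransGen.refl
  | tail _ h2 ih => exact ih.tail (spine_context L R h2)

lemma RTG_cons_g (a : V) (w : List V) :
    ReflTransGen (SpineStep (V := V)) (a :: w) (g a w) := by
  match w with
  | [] => exact Relation.ReflTransGen.refl
  | [c] => exact Relation.ReflTransGen.refl
  | c :: a' :: t =>
    rcases eq_or_ne a' a with h | h
    · rw [h, g_cons_eq]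
      exact Relation.ReflTransGen.single ⟨[], t, a, c, rfl, rfl⟩
    · rw [g_cons_ne a c a' t h]

lemma RTG_red (x : List V) : ReflTransGen (SpineStep (V := V)) x (red x) := by
  induction x with
  | nil => exact ReflTransGen.refl
  | cons a l ih =>
    have h1 : ReflTransGen (SpineStep (V := V)) (a :: l) (a :: red l) := by
      have := RTG_context [a] [] ih
      simpa using this
    rw [red_cons]
    exact h1.trans (RTG_cons_g a (red l))

/-- key: `g a (g b (g a u)) = g a u` for reduced `u`. -/
lemma ggg (a b : V) {u : List V} (hu : NonBacktracking u) :
    g a (g b (g a u)) = g a u := by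
  obtain ⟨t', hv⟩ := g_eq_cons a u
  have hvred : NonBacktracking (a :: t') := hv ▸ NB_g hu
  rw [hv]
  match t' with
  | [] => simp [g_cons_eq]
  | e :: t'' =>
    rcases eq_or_ne e b with he | he
    · rw [he]
      rw [g_cons_eq b a t'']
      match t'' with
      | [] => rfl
      | d :: t3 =>
        have hd : d ≠ a := by
          intro hda
          have := (NB_cons.mp hvred).2
          rw [he, hda] at this
          exact this rfl
        rw [g_cons_ne a b d t3 hd]
    · rw [g_cons_ne b a e t'' he, g_cons_eq]

lemma red_append_spine (l r : List V) (a b : V) :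
    red (l ++ a :: b :: a :: r) = red (l ++ a :: r) := by
  induction l with
  | nil =>
    show red (a :: b :: a :: r) = red (a :: r)
    simp only [red_cons]
    exact ggg a b (NB_red r)
  | cons c l ih =>
    show red (c :: (l ++ a :: b :: a :: r)) = red (c :: (l ++ a :: r))
    rw [red_cons, red_cons, ih]

lemma red_step {x y : List V} (h : SpineStep x y) : red x = red y := by
  obtain ⟨l, r, a, b, rfl, rfl⟩ := h
  exact red_append_spine l r a b

lemma red_RTG_eq {x y : List V} (h : ReflTransGen (SpineStep (V := V)) x y) :
    red x = red y := by
  induction h with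
  | refl => rfl
  | tail _ h2 ih => rw [ih, red_step h2]

lemma red_unique {x y : List V} (h : ReflTransGen (SpineStep (V := V)) x y)
    (hy : NonBacktracking y) : y = red x := by
  rw [red_RTG_eq h, red_eq_of_NB hy]

lemma phi_eq_red (x : List V) : phi x = red x := by
  rw [phi]
  have hex : ∃ q : List V, ReflTransGen SpineStep x q ∧ NonBacktracking q :=
    ⟨red x, RTG_red x, NB_red x⟩
  rw [dif_pos hex]
  exact red_unique hex.choose_spec.1 hex.choose_spec.2

lemma red_head? (x : List V) : (red x).head? = x.head? := by
  cases x with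
  | nil => rfl
  | cons a l =>
    rw [red_cons]
    obtain ⟨t, ht⟩ := g_eq_cons a (red l)
    rw [ht]; rfl

lemma getLast?_append_cons (l : List V) (a : V) (r : List V) :
    (l ++ a :: r).getLast? = (a :: r).getLast? := by
  rw [List.getLast?_append, Option.or_of_isSome (by simp [List.getLast?_isSome])]

lemma step_getLast? {x y : List V} (h : SpineStep x y) : x.getLast? = y.getLast? := by
  obtain ⟨l, r, a, b, rfl, rfl⟩ := h
  rw [getLast?_append_cons, getLast?_append_cons]
  cases r with
  | nil => rfl
  | cons c r' =>
    rw [List.getLast?_cons_cons, List.getLast?_cons_cons, List.getLast?_cons_cons]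

lemma RTG_getLast? {x y : List V} (h : ReflTransGen (SpineStep (V := V)) x y) :
    x.getLast? = y.getLast? := by
  induction h with
  | refl => rfl
  | tail _ h2 ih => rw [ih, step_getLast? h2]

lemma red_getLast?' (x : List V) : (red x).getLast? = x.getLast? :=
  (RTG_getLast? (RTG_red x)).symm

lemma step_chain' {R : V → V → Prop} {x y : List V} (h : SpineStep x y)
    (hc : x.Chain' R) : y.Chain' R := by
  obtain ⟨l, r, a, b, rfl, rfl⟩ := h
  rw [List.Chain', List.isChain_append] at hc ⊢
  obtain ⟨h1, h2, h3⟩ := hc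
  refine ⟨h1, ?_, ?_⟩
  · have : (a :: b :: a :: r) = [a, b] ++ a :: r := rfl
    rw [this, List.isChain_append] at h2
    exact h2.2.1
  · intro p hp q hq
    exact h3 p hp q (by cases r <;> simp_all)

lemma RTG_chain' {R : V → V → Prop} {x y : List V}
    (h : ReflTransGen (SpineStep (V := V)) x y) (hc : x.Chain' R) : y.Chain' R := by
  induction h with
  | refl => exact hc
  | tail _ h2 ih => exact step_chain' h2 ih

lemma step_length {x y : List V} (h : SpineStep x y) : y.length + 2 = x.length := by
  obtain ⟨l, r, a, b, rfl, rfl⟩ := h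
  simp; omega

lemma RTG_length_le {x y : List V} (h : ReflTransGen (SpineStep (V := V)) x y) :
    y.length ≤ x.length := by
  induction h with
  | refl => exact le_refl _
  | tail _ h2 ih => have := step_length h2; omega

lemma red_length_le (x : List V) : (red x).length ≤ x.length :=
  RTG_length_le (RTG_red x)

lemma red_ne_nil {x : List V} (h : x ≠ []) : red x ≠ [] := by
  intro hc
  have := red_head? x
  rw [hc] at this
  cases x with
  | nil => exact h rfl
  | cons a l => simp at this

lemma NB_reverse {x : List V} (h : NonBacktracking x) : NonBacktracking x.reverse := by
  rintro ⟨l, r, a, b, he⟩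
  apply h
  refine ⟨r.reverse, l.reverse, a, b, ?_⟩
  have := congrArg List.reverse he
  simpa using this

lemma square_reverse {G : GraphL V} {s : List V} (hs : IsSquareCycle G s) :
    IsSquareCycle G s.reverse := by
  obtain ⟨⟨hne, hch⟩, hnb, hlen, hcl⟩ := hs
  refine ⟨⟨by simpa using hne, ?_⟩, NB_reverse hnb, by simpa using hlen, ?_⟩
  · rw [List.Chain', List.isChain_reverse]
    exact List.IsChain.imp (fun a b h => G.symm h) hch
  · rw [List.head?_reverse, List.getLast?_reverse]
    exact hcl.symm

lemma square_shape {G : GraphL V} {s : List V} (hs : IsSquareCycle G s) :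
    ∃ (b t1 t2 t3 : V), s = [b, t1, t2, t3, b] := by
  obtain ⟨⟨hne, hch⟩, hnb, hlen, hcl⟩ := hs
  match s, hlen with
  | [v0, v1, v2, v3, v4], _ =>
    refine ⟨v0, v1, v2, v3, ?_⟩
    simp at hcl
    rw [hcl]

lemma not_NB_decomp {x : List V} (h : ¬ NonBacktracking x) :
    ∃ (l r : List V) (a b : V), x = l ++ a :: b :: a :: r := not_not.mp h

lemma get?_append_len (L y : List V) (n : ℕ) : (L ++ y)[L.length + n]? = y[n]? := by
  rw [List.getElem?_append_right (by omega)]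
  congr 1
  omega

lemma decomp_of_get {p : List V} {i : ℕ} {a : V}
    (h1 : p[i]? = some a) (h2 : p[i+2]? = some a) :
    ∃ b, p = p.take i ++ a :: b :: a :: p.drop (i+3) := by
  have hi2 : i + 2 < p.length := List.getElem?_eq_some_iff.mp h2 |>.1
  have hi1 : i + 1 < p.length := by omega
  refine ⟨p.get ⟨i+1, hi1⟩, ?_⟩
  have e1 : p = p.take i ++ p.drop i := (List.take_append_drop i p).symm
  have hdr : p.drop i = a :: p.get ⟨i+1, hi1⟩ :: a :: p.drop (i+3) := by
    have d1 : p.drop i = p.get ⟨i, by omega⟩ :: p.drop (i+1) := List.drop_eq_getElem_cons (by omega)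
    have d2 : p.drop (i+1) = p.get ⟨i+1, hi1⟩ :: p.drop (i+2) := List.drop_eq_getElem_cons hi1
    have d3 : p.drop (i+2) = p.get ⟨i+2, hi2⟩ :: p.drop (i+3) := List.drop_eq_getElem_cons hi2
    have ga : p.get ⟨i, by omega⟩ = a := by
      have := List.getElem?_eq_getElem (show i < p.length by omega)
      rw [this] at h1; exact Option.some_injective _ h1
    have ga2 : p.get ⟨i+2, hi2⟩ = a := by
      have := List.getElem?_eq_getElem hi2
      rw [this] at h2; exact Option.some_injective _ h2
    rw [d1, d2, d3, ga, ga2]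
  conv_lhs => rw [e1, hdr]

lemma NB_five {v0 v1 v2 v3 v4 : V} (h02 : v0 ≠ v2) (h13 : v1 ≠ v3) (h24 : v2 ≠ v4) :
    NonBacktracking [v0, v1, v2, v3, v4] := by
  rw [NB_iff_get]
  rintro i c ⟨g1, g2⟩
  have hi : i + 2 < 5 := by simpa using (List.getElem?_eq_some_iff.mp g2).1
  have hi' : i ≤ 2 := by omega
  interval_cases i <;> simp_all

lemma NB_five_facts {v0 v1 v2 v3 v4 : V} (h : NonBacktracking [v0, v1, v2, v3, v4]) :
    v0 ≠ v2 ∧ v1 ≠ v3 ∧ v2 ≠ v4 := by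
  have h' := NB_iff_get.mp h
  refine ⟨fun he => h' 0 v0 ⟨rfl, by simp [← he]⟩,
    fun he => h' 1 v1 ⟨rfl, by simp [← he]⟩,
    fun he => h' 2 v2 ⟨rfl, by simp [← he]⟩⟩

lemma chain'_five {R : V → V → Prop} {v0 v1 v2 v3 v4 : V} :
    List.Chain' R [v0, v1, v2, v3, v4] ↔ R v0 v1 ∧ R v1 v2 ∧ R v2 v3 ∧ R v3 v4 := by
  simp [List.Chain', List.isChain_cons_cons]


lemma get?_append_prefix (P y y' : List V) {i : ℕ} (h : i < P.length) :
    (P ++ y)[i]? = (P ++ y')[i]? := by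
  rw [List.getElem?_append_left h, List.getElem?_append_left h]

lemma lemC (G : GraphL V) (n : ℕ) :
    ∀ (x : List V), x.length = n → ∀ (k : ℕ) (s : List V),
      IsSquareCycle G s → x[k]? = s.head? →
      ReflTransGen (DifferSq G) (red x) (red (oplus x k s)) := by
  induction n using Nat.strong_induction_on with
  | _ n IH =>
  intro x hxn k s hs hk
  by_cases hx : NonBacktracking x
  · rw [red_eq_of_NB hx]
    exact ReflTransGen.single (Or.inl ⟨k, s, hs, hk, (phi_eq_red _).symm⟩)
  by_cases H : ∀ (L R : List V) (α β : V), x = L ++ α :: β :: α :: R → L.length + 1 = k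
  · obtain ⟨l, r, a, b, hdec⟩ := not_NB_decomp hx
    have hm := H l r a b hdec
    subst hdec
    subst hm
    -- x = l ++ a::b::a::r , k = l.length + 1
    obtain ⟨b0, t1, t2, t3, hsh⟩ := square_shape hs
    have hxk : (l ++ a :: b :: a :: r)[l.length + 1]? = some b := by
      rw [show l ++ a :: b :: a :: r = (l ++ [a]) ++ (b :: a :: r) by simp,
        show l.length + 1 = (l ++ [a]).length + 0 by simp, get?_append_len]
      rfl
    have hbb0 : b = b0 := by
      rw [hxk, hsh] at hk
      simpa using hk
    have hs5 : s = [b, t1, t2, t3, b] := by rw [hsh, ← hbb0]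
    obtain ⟨hswk, hsnb, hslen, hscl⟩ := hs
    have hch : G.Adj b t1 ∧ G.Adj t1 t2 ∧ G.Adj t2 t3 ∧ G.Adj t3 b := by
      have := hswk.2
      rw [hs5, chain'_five] at this
      exact this
    have hnbf : b ≠ t2 ∧ t1 ≠ t3 ∧ t2 ≠ b := by
      have := NB_five_facts (hs5 ▸ hsnb)
      exact this
    have e_z : oplus (l ++ a :: b :: a :: r) (l.length + 1) s
        = l ++ a :: b :: t1 :: t2 :: t3 :: b :: a :: r := by
      unfold oplus
      rw [show l ++ a :: b :: a :: r = (l ++ [a]) ++ (b :: a :: r) by simp,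
        show l.length + 1 = (l ++ [a]).length by simp, List.take_left,
        show (l ++ [a]).length + 1 = (l ++ [a]).length + 1 from rfl, List.drop_append, hs5]
      simp
    have hxstep : red (l ++ a :: b :: a :: r) = red (l ++ a :: r) :=
      red_step ⟨l, r, a, b, rfl, rfl⟩
    have hlen2 : (l ++ a :: r).length + 2 = n := by
      simp at hxn ⊢
      omega
    rw [e_z, hxstep]
    by_cases h1 : t1 = a
    · -- rotate the square to start at a
      subst h1
      have hsq' : IsSquareCycle G [t1, t2, t3, b, t1] := by
        refine ⟨⟨by simp, ?_⟩, ?_, by simp, by simp⟩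
        · rw [chain'_five]
          exact ⟨hch.2.1, hch.2.2.1, hch.2.2.2, hch.1⟩
        · refine NB_five ?_ ?_ ?_
          · exact fun he => hnbf.2.1 (by rw [← he])
          · exact fun he => hnbf.2.2 (by rw [← he])
          · exact fun he => hnbf.2.1 (by rw [he])
      have e2 : oplus (l ++ t1 :: r) l.length [t1, t2, t3, b, t1]
          = l ++ t1 :: (t2 :: t3 :: b :: t1 :: r) := by
        unfold oplus
        rw [List.take_left, List.drop_append]
        simp
      have hstep : SpineStep (l ++ t1 :: b :: t1 :: t2 :: t3 :: b :: t1 :: r)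
          (oplus (l ++ t1 :: r) l.length [t1, t2, t3, b, t1]) := by
        rw [e2]
        exact ⟨l, t2 :: t3 :: b :: t1 :: r, t1, b, by simp, by simp⟩
      rw [red_step hstep]
      refine IH _ (by omega) _ rfl l.length _ hsq' ?_
      rw [show l.length = l.length + 0 by omega, get?_append_len]
      rfl
    · by_cases h3 : t3 = a
      · subst h3
        have hsq' : IsSquareCycle G [t3, b, t1, t2, t3] := by
          refine ⟨⟨by simp, ?_⟩, ?_, by simp, by simp⟩
          · rw [chain'_five]
            exact ⟨hch.2.2.2, hch.1, hch.2.1, hch.2.2.1⟩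
          · refine NB_five ?_ ?_ ?_
            · exact fun he => h1 he.symm
            · exact hnbf.1
            · exact h1
        have e2 : oplus (l ++ t3 :: r) l.length [t3, b, t1, t2, t3]
            = (l ++ [t3, b, t1, t2]) ++ t3 :: r := by
          unfold oplus
          rw [List.take_left, List.drop_append]
          simp
        have hstep : SpineStep (l ++ t3 :: b :: t1 :: t2 :: t3 :: b :: t3 :: r)
            (oplus (l ++ t3 :: r) l.length [t3, b, t1, t2, t3]) := by
          rw [e2]
          exact ⟨l ++ [t3, b, t1, t2], r, t3, b, by simp, by simp⟩
        rw [red_step hstep]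
        refine IH _ (by omega) _ rfl l.length _ hsq' ?_
        rw [show l.length = l.length + 0 by omega, get?_append_len]
        rfl
      · -- both t1 ≠ a and t3 ≠ a : the inserted word is already reduced
        set z := l ++ a :: b :: t1 :: t2 :: t3 :: b :: a :: r with hzdef
        have hH' : ∀ (p : ℕ) (c : V), (l ++ a :: b :: a :: r)[p]? = some c →
            (l ++ a :: b :: a :: r)[p+2]? = some c → p = l.length := by
          intro p c h1' h2'
          obtain ⟨d, hd⟩ := decomp_of_get h1' h2'
          have := H ((l ++ a :: b :: a :: r).take p) ((l ++ a :: b :: a :: r).drop (p+3)) c d hd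
          have hplen : p + 2 < (l ++ a :: b :: a :: r).length := (List.getElem?_eq_some_iff.mp h2').1
          rw [List.length_take] at this
          omega
        have hmid : ∀ i, z[l.length + i]?
            = (a :: b :: t1 :: t2 :: t3 :: b :: a :: r)[i]? :=
          fun i => get?_append_len l _ i
        have hpre : ∀ i, i < l.length + 2 →
            z[i]? = (l ++ a :: b :: a :: r)[i]? := by
          intro i hi
          rw [show z = (l ++ [a, b]) ++ (t1 :: t2 :: t3 :: b :: a :: r) by simp [hzdef],
            show l ++ a :: b :: a :: r = (l ++ [a, b]) ++ (a :: r) by simp]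
          exact get?_append_prefix _ _ _ (by simp; omega)
        have hsuf : ∀ i, z[l.length + 5 + i]?
            = (l ++ a :: b :: a :: r)[l.length + 1 + i]? := by
          intro i
          rw [show z = (l ++ [a, b, t1, t2, t3]) ++ (b :: a :: r) by simp [hzdef],
            show l.length + 5 + i = (l ++ [a, b, t1, t2, t3]).length + i by simp,
            get?_append_len,
            show l ++ a :: b :: a :: r = (l ++ [a]) ++ (b :: a :: r) by simp,
            show l.length + 1 + i = (l ++ [a]).length + i by simp, get?_append_len]
        have hznb : NonBacktracking z := by
          rw [NB_iff_get]
          rintro p c ⟨hzp, hzp2⟩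
          rcases Nat.lt_or_ge (p + 2) (l.length + 2) with hp | hp
          · have e1 : z[p]? = (l ++ a :: b :: a :: r)[p]? := hpre p (by omega)
            have e2 : z[p+2]? = (l ++ a :: b :: a :: r)[p+2]? := hpre (p+2) hp
            have := hH' p c (e1 ▸ hzp) (e2 ▸ hzp2)
            omega
          · rcases Nat.lt_or_ge p (l.length + 5) with hp2 | hp2
            · obtain ⟨i, hi, rfl⟩ : ∃ i, i ≤ 4 ∧ p = l.length + i :=
                ⟨p - l.length, by omega, by omega⟩
              have e1 := hmid i
              have e2 := hmid (i + 2)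
              rw [show l.length + i + 2 = l.length + (i + 2) by omega] at hzp2
              rw [e1] at hzp
              rw [e2] at hzp2
              interval_cases i <;>
                [ (exact h1 ((Option.some_injective _ hzp2).trans
                    (Option.some_injective _ hzp).symm));
                  (exact hnbf.2.2 ((Option.some_injective _ hzp2).trans
                    (Option.some_injective _ hzp).symm));
                  (exact hnbf.2.1 ((Option.some_injective _ hzp).trans
                    (Option.some_injective _ hzp2).symm));
                  (exact hnbf.2.2 ((Option.some_injective _ hzp).trans
                    (Option.some_injective _ hzp2).symm));
                  (exact h3 ((Option.some_injective _ hzp).trans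
                    (Option.some_injective _ hzp2).symm))]
            · obtain ⟨i, rfl⟩ : ∃ i, p = l.length + 5 + i := ⟨p - l.length - 5, by omega⟩
              have e1 := hsuf i
              have e2 := hsuf (i + 2)
              rw [show l.length + 5 + i + 2 = l.length + 5 + (i + 2) by omega] at hzp2
              rw [e1] at hzp
              rw [e2] at hzp2
              rw [show l.length + 1 + (i + 2) = l.length + 1 + i + 2 by omega] at hzp2
              have := hH' (l.length + 1 + i) c hzp hzp2
              omega
        have hz5 : z[l.length + 5]? = some b := by
          rw [hmid 5]
          rfl
        have hsrev : s.reverse = [b, t3, t2, t1, b] := by rw [hs5]; rfl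
        have hOeq : oplus z (l.length + 5) s.reverse
            = l ++ a :: b :: t1 :: t2 :: t3 :: b :: t3 :: t2 :: t1 :: b :: a :: r := by
          unfold oplus
          rw [show z = (l ++ [a, b, t1, t2, t3]) ++ (b :: a :: r) by simp [hzdef],
            show l.length + 5 = (l ++ [a, b, t1, t2, t3]).length by simp, List.take_left,
            List.drop_append, hsrev]
          simp
        have hredO : red (oplus z (l.length + 5) s.reverse) = red (l ++ a :: r) := by
          rw [hOeq]
          have s1 : SpineStep (l ++ a :: b :: t1 :: t2 :: t3 :: b :: t3 :: t2 :: t1 :: b :: a :: r)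
              (l ++ a :: b :: t1 :: t2 :: t3 :: t2 :: t1 :: b :: a :: r) :=
            ⟨l ++ [a, b, t1, t2], t2 :: t1 :: b :: a :: r, t3, b, by simp, by simp⟩
          have s2 : SpineStep (l ++ a :: b :: t1 :: t2 :: t3 :: t2 :: t1 :: b :: a :: r)
              (l ++ a :: b :: t1 :: t2 :: t1 :: b :: a :: r) :=
            ⟨l ++ [a, b, t1], t1 :: b :: a :: r, t2, t3, by simp, by simp⟩
          have s3 : SpineStep (l ++ a :: b :: t1 :: t2 :: t1 :: b :: a :: r)
              (l ++ a :: b :: t1 :: b :: a :: r) :=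
            ⟨l ++ [a, b], b :: a :: r, t1, t2, by simp, by simp⟩
          have s4 : SpineStep (l ++ a :: b :: t1 :: b :: a :: r)
              (l ++ a :: b :: a :: r) :=
            ⟨l ++ [a], a :: r, b, t1, by simp, by simp⟩
          have s5 : SpineStep (l ++ a :: b :: a :: r) (l ++ a :: r) :=
            ⟨l, r, a, b, rfl, rfl⟩
          rw [red_step s1, red_step s2, red_step s3, red_step s4, red_step s5]
        have hDS : DifferSq G (red (l ++ a :: r)) z := by
          refine Or.inr ⟨l.length + 5, s.reverse,
            square_reverse ⟨hswk, hsnb, hslen, hscl⟩, ?_, ?_⟩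
          · rw [hz5, hsrev]; rfl
          · rw [phi_eq_red, hredO]
        rw [red_eq_of_NB hznb]
        exact ReflTransGen.single hDS
  · push_neg at H
    obtain ⟨L, R, α, β, hx2, hne⟩ := H
    subst hx2
    set x := L ++ α :: β :: α :: R with hxdef
    have hred : red x = red (L ++ α :: R) := red_step ⟨L, R, α, β, rfl, rfl⟩
    have hlen' : (L ++ α :: R).length + 2 = n := by simp [← hxn, hxdef]; omega
    have hcase : k < L.length ∨ k = L.length ∨ k = L.length + 2 ∨ L.length + 3 ≤ k := by omega
    rw [hred]
    rcases hcase with hc | hc | hc | hc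
    · -- k < |L|
      have e1 : oplus x k s = (L.take k ++ s ++ L.drop (k+1)) ++ α :: β :: α :: R := by
        unfold oplus
        rw [List.take_append_of_le_length (by omega),
          List.drop_append_of_le_length (by omega)]
        simp
      have e2 : oplus (L ++ α :: R) k s = (L.take k ++ s ++ L.drop (k+1)) ++ α :: R := by
        unfold oplus
        rw [List.take_append_of_le_length (by omega),
          List.drop_append_of_le_length (by omega)]
        simp
      have hstep : SpineStep (oplus x k s) (oplus (L ++ α :: R) k s) := ⟨_, R, α, β, e1, e2⟩
      rw [red_step hstep]
      refine IH _ (by omega) _ rfl k s hs ?_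
      rw [List.getElem?_append_left (by omega)]
      rw [List.getElem?_append_left (by omega)] at hk
      exact hk
    · -- k = |L|
      subst hc
      have hxm : x[L.length]? = some α := by
        rw [show L.length = L.length + 0 by omega, hxdef, get?_append_len]
        rfl
      obtain ⟨b0, t1, t2, t3, hsh⟩ := square_shape hs
      have hba : α = b0 := by
        rw [hxm, hsh] at hk
        simpa using hk
      have hs5 : s = [α, t1, t2, t3, α] := by rw [hsh, hba]
      have e1 : oplus x L.length s = (L ++ [α, t1, t2, t3]) ++ α :: β :: α :: R := by
        unfold oplus
        rw [hxdef, List.take_left, show L.length + 1 = L.length + 1 by rfl,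
          List.drop_append, hs5]
        simp
      have e2 : oplus (L ++ α :: R) L.length s = (L ++ [α, t1, t2, t3]) ++ α :: R := by
        unfold oplus
        rw [List.take_left, List.drop_append, hs5]
        simp
      have hstep : SpineStep (oplus x L.length s) (oplus (L ++ α :: R) L.length s) :=
        ⟨_, R, α, β, e1, e2⟩
      rw [red_step hstep]
      refine IH _ (by omega) _ rfl L.length s hs ?_
      rw [show L.length = L.length + 0 by omega, get?_append_len, hs5]
      rfl
    · -- k = |L| + 2
      subst hc
      have hxm : x[L.length + 2]? = some α := by
        rw [hxdef, get?_append_len]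
        rfl
      obtain ⟨b0, t1, t2, t3, hsh⟩ := square_shape hs
      have hba : α = b0 := by
        rw [hxm, hsh] at hk
        simpa using hk
      have hs5 : s = [α, t1, t2, t3, α] := by rw [hsh, hba]
      have e1 : oplus x (L.length + 2) s = L ++ α :: β :: α :: (t1 :: t2 :: t3 :: α :: R) := by
        unfold oplus
        rw [hxdef, List.take_length_add_append, show L.length + 2 + 1 = L.length + 3 by omega,
          List.drop_length_add_append, hs5]
        simp
      have e2 : oplus (L ++ α :: R) L.length s = L ++ α :: (t1 :: t2 :: t3 :: α :: R) := by
        unfold oplus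
        rw [List.take_left, List.drop_append, hs5]
        simp
      have hstep : SpineStep (oplus x (L.length + 2) s) (oplus (L ++ α :: R) L.length s) :=
        ⟨L, _, α, β, e1, e2⟩
      rw [red_step hstep]
      refine IH _ (by omega) _ rfl L.length s hs ?_
      rw [show L.length = L.length + 0 by omega, get?_append_len, hs5]
      rfl
    · -- |L| + 3 ≤ k
      obtain ⟨j, hkj⟩ : ∃ j, k = L.length + 3 + j := ⟨k - L.length - 3, by omega⟩
      subst hkj
      have hL3 : x = (L ++ [α, β, α]) ++ R := by rw [hxdef]; simp
      have e1 : oplus x (L.length + 3 + j) s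
          = L ++ α :: β :: α :: (R.take j ++ s ++ R.drop (j+1)) := by
        unfold oplus
        rw [hL3, show L.length + 3 + j = (L ++ [α, β, α]).length + j by simp,
          List.take_length_add_append, show (L ++ [α, β, α]).length + j + 1
            = (L ++ [α, β, α]).length + (j + 1) by omega, List.drop_length_add_append]
        simp
      have e2 : oplus (L ++ α :: R) (L.length + 1 + j) s
          = L ++ α :: (R.take j ++ s ++ R.drop (j+1)) := by
        unfold oplus
        rw [show L ++ α :: R = (L ++ [α]) ++ R by simp,
          show L.length + 1 + j = (L ++ [α]).length + j by simp,
          List.take_length_add_append, show (L ++ [α]).length + j + 1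
            = (L ++ [α]).length + (j + 1) by omega, List.drop_length_add_append]
        simp
      have hstep : SpineStep (oplus x (L.length + 3 + j) s)
          (oplus (L ++ α :: R) (L.length + 1 + j) s) := ⟨L, _, α, β, e1, e2⟩
      rw [red_step hstep]
      refine IH _ (by omega) _ rfl (L.length + 1 + j) s hs ?_
      rw [show L ++ α :: R = (L ++ [α]) ++ R by simp,
        show L.length + 1 + j = (L ++ [α]).length + j by simp, get?_append_len]
      rw [hL3, show L.length + 3 + j = (L ++ [α, β, α]).length + j by simp,
        get?_append_len] at hk
      exact hk


lemma DS_symm {G : GraphL V} : Symmetric (DifferSq G) := by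
  rintro p q (h | h)
  · exact Or.inr h
  · exact Or.inl h

lemma RTG_DS_symm {G : GraphL V} : Symmetric (Relation.ReflTransGen (DifferSq G)) :=
  fun x y h => (@Relation.ReflTransGen.stdSymm _ _ ⟨fun a b h' => DS_symm h'⟩).symm x y h

lemma head?_eq_get?0 (l : List V) : l.head? = l[0]? := by cases l <;> rfl

lemma oplus_head {a s : List V} {k : ℕ} {w : V} (h : a[k]? = s.head?)
    (hw : s.head? = some w) : (oplus a k s).head? = a.head? := by
  have hk : k < a.length := by
    have := List.getElem?_eq_some_iff.mp (h.trans hw)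
    exact this.1
  match a, k with
  | a0 :: a', 0 =>
    show ((List.take 0 (a0 :: a')) ++ s ++ _).head? = _
    rw [List.take_zero, List.nil_append, List.head?_append, hw]
    have : s.head? = some a0 := by
      rw [← h]; rfl
    rw [hw] at this
    simpa using this
  | a0 :: a', (k+1) =>
    show ((a0 :: List.take k a') ++ s ++ _).head? = _
    rfl

lemma DS_head {G : GraphL V} {a b : List V} (h : DifferSq G a b) : a.head? = b.head? := by
  rcases h with ⟨k, s, hs, hk, rfl⟩ | ⟨k, s, hs, hk, heq⟩
  · obtain ⟨b0, t1, t2, t3, hsh⟩ := square_shape hs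
    rw [phi_eq_red, red_head?, oplus_head hk (by rw [hsh]; rfl)]
  · obtain ⟨b0, t1, t2, t3, hsh⟩ := square_shape hs
    rw [heq, phi_eq_red, red_head?, oplus_head hk (by rw [hsh]; rfl)]

lemma RTG_DS_head {G : GraphL V} {a b : List V}
    (h : Relation.ReflTransGen (DifferSq G) a b) : a.head? = b.head? := by
  induction h with
  | refl => rfl
  | tail _ h2 ih => rw [ih, DS_head h2]

lemma context_step {G : GraphL V} {p q : List V} (L R : List V) (h : DifferSq G p q) :
    Relation.ReflTransGen (DifferSq G) (red (L ++ p ++ R)) (red (L ++ q ++ R)) := by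
  have half : ∀ p q : List V, (∃ (k : ℕ) (s : List V), IsSquareCycle G s ∧
      p[k]? = s.head? ∧ q = phi (oplus p k s)) →
      Relation.ReflTransGen (DifferSq G) (red (L ++ p ++ R)) (red (L ++ q ++ R)) := by
    rintro p q ⟨k, s, hs, hk, rfl⟩
    obtain ⟨b0, t1, t2, t3, hsh⟩ := square_shape hs
    have hk' : k < p.length := by
      have := List.getElem?_eq_some_iff.mp (hk.trans (by rw [hsh]; rfl))
      exact this.1
    have h1 : (L ++ p ++ R)[L.length + k]? = s.head? := by
      rw [List.append_assoc, get?_append_len, List.getElem?_append_left hk']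
      exact hk
    have hmain := lemC G (L ++ p ++ R).length (L ++ p ++ R) rfl (L.length + k) s hs h1
    have heq : oplus (L ++ p ++ R) (L.length + k) s = L ++ oplus p k s ++ R := by
      unfold oplus
      rw [show L ++ p ++ R = L ++ (p ++ R) from List.append_assoc L p R,
        List.take_length_add_append, List.take_append_of_le_length (by omega),
        show L.length + k + 1 = L.length + (k + 1) by omega, List.drop_length_add_append,
        List.drop_append_of_le_length (by omega)]
      simp
    have heq2 : red (L ++ oplus p k s ++ R) = red (L ++ red (oplus p k s) ++ R) :=
      red_RTG_eq (RTG_context L R (RTG_red _))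
    rw [phi_eq_red, ← heq2, ← heq]
    exact hmain
  rcases h with h' | h'
  · exact half p q h'
  · exact RTG_DS_symm (half q p h')

lemma context_chain {G : GraphL V} {p q : List V} (L R : List V)
    (h : Relation.ReflTransGen (DifferSq G) p q) :
    Relation.ReflTransGen (DifferSq G) (red (L ++ p ++ R)) (red (L ++ q ++ R)) := by
  induction h with
  | refl => exact Relation.ReflTransGen.refl
  | tail _ h2 ih => exact ih.trans (context_step L R h2)

lemma revcancel : ∀ (q : List V) (v : V), q.getLast? = some v →
    Relation.ReflTransGen (SpineStep (V := V)) (q.reverse ++ q.tail) [v]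
  | [], v, h => by simp at h
  | [x], v, h => by
    simp at h
    subst h
    exact Relation.ReflTransGen.refl
  | x :: y :: t, v, h => by
    have ih := revcancel (y :: t) v (by rwa [List.getLast?_cons_cons] at h)
    refine Relation.ReflTransGen.head ?_ ih
    refine ⟨t.reverse, t, y, x, by simp, by simp⟩

lemma chain'_adj_get {R : V → V → Prop} {c : List V} (h : List.Chain' R c) {j : ℕ} {x y : V}
    (hx : (c)[j]? = some x) (hy : (c)[j+1]? = some y) : R x y := by
  rw [List.Chain', List.isChain_iff_getElem] at h
  obtain ⟨hyl, hy'⟩ := List.getElem?_eq_some_iff.mp hy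
  obtain ⟨hxl, hx'⟩ := List.getElem?_eq_some_iff.mp hx
  have := h j (by omega)
  rw [hx', hy'] at this
  exact this

lemma head?_take_pos {c : List V} {i : ℕ} (hi : 0 < i) : (c.take i).head? = c.head? := by
  cases c with
  | nil => simp
  | cons c0 ct =>
    match i, hi with
    | (j+1), _ => rfl

lemma cycle_contract (G : GraphL V) (hsq : SquareDecomposable G) (n : ℕ) :
    ∀ c : List V, c.length = n → IsWalkL G c → NonBacktracking c →
      c.head? = c.getLast? → ∀ u, c.head? = some u →
      Relation.ReflTransGen (DifferSq G) c [u] := by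
  induction n using Nat.strong_induction_on with
  | _ n IH =>
  intro c hcn hwk hnb hcl u hu
  have hcne := hwk.1
  by_cases hn1 : c.length ≤ 1
  · obtain ⟨c0, rfl⟩ : ∃ c0, c = [c0] := by
      match c, hn1 with
      | [], _ => exact absurd rfl hcne
      | [c0], _ => exact ⟨c0, rfl⟩
    have : c0 = u := by simpa using hu
    subst this
    exact Relation.ReflTransGen.refl
  push_neg at hn1
  classical
  set P : ℕ → Prop := fun d => 0 < d ∧ ∃ i, i + d < c.length ∧ (c)[i]? = (c)[i + d]?
    with hPdef
  have hPex : P (c.length - 1) := by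
    refine ⟨by omega, 0, by omega, ?_⟩
    rw [Nat.zero_add, ← head?_eq_get?0, hcl, List.getLast?_eq_getElem?]
  have dEx : ∃ d, P d := ⟨_, hPex⟩
  set d := Nat.find dEx with hddef
  obtain ⟨hd0, i, hid, hgi⟩ := Nat.find_spec dEx
  have hmin : ∀ d', d' < d → ¬ P d' := fun d' h => Nat.find_min dEx h
  obtain ⟨w, hw'⟩ : ∃ w, (c)[i]? = some w := by
    have hil : i < c.length := by omega
    exact ⟨c.get ⟨i, hil⟩, List.getElem?_eq_getElem hil⟩
  set seg := (c.drop i).take (d+1) with hseg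
  have hseglen : seg.length = d + 1 := by
    rw [hseg]
    simp
    omega
  have hsegget : ∀ j, j < d + 1 → seg[j]? = (c)[i + j]? := by
    intro j hj
    rw [hseg, List.getElem?_take_of_lt hj, List.getElem?_drop]
  have hsegsimple : IsSimpleCycleL G seg := by
    refine ⟨⟨⟨?_, ?_⟩, ?_⟩, ?_⟩
    · intro h
      rw [h] at hseglen
      simp at hseglen
    · exact (hwk.2.drop i).take (d+1)
    · rw [head?_eq_get?0, List.getLast?_eq_getElem?, hseglen,
        show d + 1 - 1 = d from rfl, hsegget 0 (by omega), hsegget d (by omega),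
        Nat.add_zero]
      exact hgi
    · intro i' j' hij hjlen hgg
      rw [hseglen] at hjlen
      rw [hsegget i' (by omega), hsegget j' (by omega)] at hgg
      have hnd : ¬ (j' - i' < d) := by
        intro hlt
        refine hmin _ hlt ⟨by omega, i + i', by omega, ?_⟩
        rw [show i + i' + (j' - i') = i + j' by omega]
        exact hgg
      constructor
      · omega
      · rw [hseglen]; omega
  obtain ⟨v', hchain⟩ := hsq seg hsegsimple
  have hv'w : v' = w := by
    have h2 := RTG_DS_head hchain
    rw [head?_eq_get?0, hsegget 0 (by omega), Nat.add_zero, hw'] at h2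
    simpa using h2.symm
  subst hv'w
  have hid1 : c.take i ++ seg ++ c.drop (i+d+1) = c := by
    rw [hseg, show i + d + 1 = i + (d+1) by omega, ← List.drop_drop,
      List.append_assoc, List.take_append_drop, List.take_append_drop]
  have hctx := context_chain (c.take i) (c.drop (i+d+1)) hchain
  rw [hid1, red_eq_of_NB hnb] at hctx
  set c'' := c.take i ++ [v'] ++ c.drop (i+d+1) with hc''def
  have htk : c.take i ++ [v'] = c.take (i+1) := by
    rw [List.take_succ, hw']
    rfl
  have hc''chain : List.Chain' G.Adj c'' := by
    rw [hc''def, htk, List.Chain', List.isChain_append]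
    refine ⟨hwk.2.take (i+1), hwk.2.drop (i+d+1), ?_⟩
    intro x hx y hy
    have hxw : x = v' := by
      rw [← htk, List.getLast?_concat] at hx
      simpa using hx.symm
    have hy' : (c)[i+d+1]? = some y := by
      rw [List.head?_drop] at hy
      exact hy
    subst hxw
    exact chain'_adj_get hwk.2 (by rw [← hgi]; exact hw') hy'
  have hc''h : c''.head? = some u := by
    rw [hc''def]
    rcases Nat.eq_zero_or_pos i with hi | hi
    · subst hi
      simp only [List.take_zero, List.nil_append]
      rw [head?_eq_get?0] at hu
      have hvu : v' = u := by
        rw [hw'] at hu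
        simpa using hu
      simp [hvu]
    · rw [List.append_assoc, List.head?_append, head?_take_pos hi, hu]
      rfl
  have hc''l : c''.getLast? = some u := by
    have hulast : c.getLast? = some u := by rw [← hcl, hu]
    rcases Nat.lt_or_ge (i+d+1) c.length with hlt | hge
    · have hne : (c.drop (i+d+1)).getLast?.isSome := by
        rw [List.getLast?_isSome]
        intro h
        have := congrArg List.length h
        simp at this
        omega
      have h2 : c.getLast? = (c.drop (i+d+1)).getLast? := by
        conv_lhs => rw [← List.take_append_drop (i+d+1) c]
        rw [List.getLast?_append, Option.or_of_isSome hne]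
      rw [hc''def, List.append_assoc, List.getLast?_append,
        Option.or_of_isSome (by rw [List.getLast?_append]; simpa using hne)]
      rw [List.getLast?_append, Option.or_of_isSome hne, ← h2, hulast]
    · have hdn : c.drop (i+d+1) = [] := List.drop_eq_nil_of_le hge
      have hiu : (c)[i+d]? = some u := by
        rw [show i + d = c.length - 1 by omega, ← List.getLast?_eq_getElem?, hulast]
      have hvu : v' = u := by
        rw [← hgi, hw'] at hiu
        simpa using hiu
      rw [hc''def, hdn, List.append_nil, List.getLast?_concat, hvu]
  have hc''ne : c'' ≠ [] := by rw [hc''def]; simp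
  have hc''len : c''.length + d = c.length := by
    rw [hc''def]
    simp [List.length_take, List.length_drop]
    omega
  have hlt2 : (red c'').length < n := by
    have := red_length_le c''
    omega
  have hfin := IH _ hlt2 (red c'') rfl
    ⟨red_ne_nil hc''ne, RTG_chain' (RTG_red _) hc''chain⟩ (NB_red _)
    (by rw [red_head?, red_getLast?', hc''h, hc''l]) u (by rw [red_head?, hc''h])
  exact hctx.trans hfin

end SqAux


open SqAux Relation in
/-- In a square-decomposable connected graph, any two non-backtracking walks with
the same starting vertex and the same ending vertex are `∼_□`-equivalent. -/
theorem stmt_12 {V : Type*} (G : GraphL V) (hconn : G.ConnectedL)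
    (hsq : SquareDecomposable G) (p q : List V)
    (hp : IsWalkL G p) (hq : IsWalkL G q)
    (hnp : NonBacktracking p) (hnq : NonBacktracking q)
    (hstart : p.head? = q.head?) (hend : p.getLast? = q.getLast?) :
    Relation.ReflTransGen (DifferSq G) p q := by
  classical
  obtain ⟨u, hu⟩ : ∃ u, p.head? = some u := by
    cases p with
    | nil => exact absurd rfl hp.1
    | cons p0 p' => exact ⟨p0, rfl⟩
  obtain ⟨v, hv⟩ : ∃ v, p.getLast? = some v :=
    ⟨p.getLast hp.1, List.getLast?_eq_getLast hp.1⟩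
  have hqh : q.head? = some u := hstart ▸ hu
  have hql : q.getLast? = some v := hend ▸ hv
  have hrevh : q.reverse.head? = some v := by rw [List.head?_reverse, hql]
  have hrevl : q.reverse.getLast? = some u := by rw [List.getLast?_reverse, hqh]
  set c0 := p.dropLast ++ q.reverse with hc0
  have hpd : p.dropLast ++ [v] = p := by
    have h1 := List.dropLast_append_getLast hp.1
    have h2 : p.getLast hp.1 = v := by
      rw [List.getLast?_eq_getLast hp.1] at hv
      simpa using hv
    rw [h2] at h1
    exact h1
  have hcons : v :: q.reverse.tail = q.reverse :=
    List.cons_head?_tail (Option.mem_def.mpr hrevh)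
  have hc0alt : c0 = p ++ q.reverse.tail := by
    have h5 : p ++ q.reverse.tail = p.dropLast ++ q.reverse := by
      conv_lhs => rw [← hpd]
      simp only [List.append_assoc, List.singleton_append]
      rw [hcons]
    rw [hc0, h5]
  have hc0chain : List.Chain' G.Adj c0 := by
    rw [hc0, List.Chain', List.isChain_append]
    refine ⟨?_, ?_, ?_⟩
    · rw [List.dropLast_eq_take]
      exact hp.2.take _
    · rw [List.isChain_reverse]
      exact List.IsChain.imp (fun a b h => G.symm h) hq.2
    · have hsplit := List.isChain_append.mp
        (show List.Chain' G.Adj (p.dropLast ++ [v]) by rw [hpd]; exact hp.2)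
      intro x hx y hy
      have hyv : y = v := by
        rw [hrevh] at hy
        exact (by simpa using hy : v = y).symm
      subst hyv
      exact hsplit.2.2 x hx y (by simp)
  have hc0h : c0.head? = some u := by
    rw [hc0alt, List.head?_append, hu]
    rfl
  have hc0l : c0.getLast? = some u := by
    rw [hc0, List.getLast?_append, hrevl]
    rfl
  have hc0ne : c0 ≠ [] := by
    rw [hc0alt]
    intro h
    exact hp.1 (List.append_eq_nil_iff.mp h).1
  have hcontr := cycle_contract G hsq (red c0).length (red c0) rfl
    ⟨red_ne_nil hc0ne, RTG_chain' (RTG_red _) hc0chain⟩ (NB_red _)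
    (by rw [red_head?, red_getLast?', hc0h, hc0l]) u (by rw [red_head?, hc0h])
  have h1 := context_chain ([] : List V) q.tail hcontr
  simp only [List.nil_append] at h1
  have h2 : red (red c0 ++ q.tail) = red (c0 ++ q.tail) := by
    have := red_RTG_eq (RTG_context [] q.tail (RTG_red c0))
    simpa using this.symm
  have h3 : red (c0 ++ q.tail) = p := by
    have hrc := revcancel q v hql
    have hlift := RTG_context p.dropLast [] hrc
    simp only [List.append_nil] at hlift
    have he : c0 ++ q.tail = p.dropLast ++ (q.reverse ++ q.tail) := by
      rw [hc0, List.append_assoc]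
    rw [he, red_RTG_eq hlift, hpd]
    exact red_eq_of_NB hnp
  have h4 : red ([u] ++ q.tail) = q := by
    have hq' : [u] ++ q.tail = q := List.cons_head?_tail (Option.mem_def.mpr hqh)
    rw [hq']
    exact red_eq_of_NB hnq
  rw [h2, h3, h4] at h1
  exact h1
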